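/- arXiv:2510.23132 — 6 statements merged into one kernel-verified Lean document; each statement's English description precedes it below -/
import Mathlib

section
/- If A is pseudo-similar to B via T (with inner inverses T⁻ and T⁼ such that A = T B T⁼ and B = T⁻ A T), then B = T⁻ T B T⁼ T, B = T⁻ T B, and B = B T⁼ T. -/
open ContinuousLinearMap

/-- If `A` is pseudo-similar to `B` via `T` (with inner inverses `T⁻ = Tm`,
`T⁼ = Te` such that `A = T B T⁼` and `B = T⁻ A T`), then `B = T⁻ T B T⁼ T`, `B = T⁻ T B`
and `B = B T⁼ T`. -/
theorem stmt_1 {H K : Type*} [NormedAddCommGroup H] [InnerProductSpace ℂ H] [CompleteSpace H]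
    [NormedAddCommGroup K] [InnerProductSpace ℂ K] [CompleteSpace K]
    (A : H →L[ℂ] H) (B : K →L[ℂ] K) (T : K →L[ℂ] H) (Tm Te : H →L[ℂ] K)
    (hTm : T ∘L Tm ∘L T = T) (hTe : T ∘L Te ∘L T = T)
    (hA : A = T ∘L B ∘L Te) (hB : B = Tm ∘L A ∘L T) :
    B = Tm ∘L T ∘L B ∘L Te ∘L T ∧ B = Tm ∘L T ∘L B ∧ B = B ∘L Te ∘L T := by
  have pm : ∀ x, T (Tm (T x)) = T x := fun x => by
    have := DFunLike.congr_fun hTm x; simpa using this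
  have pe : ∀ x, T (Te (T x)) = T x := fun x => by
    have := DFunLike.congr_fun hTe x; simpa using this
  have hBx : ∀ x, B x = Tm (T (B (Te (T x)))) := fun x => by
    have := DFunLike.congr_fun hB x
    simp only [hA, comp_apply] at this ⊢
    exact this
  have h2 : ∀ x, B x = Tm (T (B x)) := fun x => by
    conv_lhs => rw [hBx x]
    rw [← pm (B (Te (T x))), ← hBx x]
  refine ⟨?_, ?_, ?_⟩
  · ext x; simpa using hBx x
  · ext x; simpa using h2 x
  · ext x
    simp only [comp_apply]
    rw [hBx x, ← h2 (Te (T x))]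
end

section
/- Let T be a regular operator with inner inverses T⁻ and T⁼. The following are equivalent: (i) A = T B T⁼ and B = T⁻ A T; (ii) A T = T B, A = A T T⁼, and B = T⁻ T B; (iii) B T⁼ = T⁻ A, T T⁻ A = A, and B T⁼ T = B. -/
open ContinuousLinearMap

/-- For a regular operator `T` with inner inverses `T⁻ = Tm` and `T⁼ = Te`,
the following are equivalent:
(i) `A = T B T⁼` and `B = T⁻ A T`;
(ii) `A T = T B`, `A = A T T⁼` and `B = T⁻ T B`;
(iii) `B T⁼ = T⁻ A`, `T T⁻ A = A` and `B T⁼ T = B`. -/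
theorem stmt_4 {H K : Type*} [NormedAddCommGroup H] [InnerProductSpace ℂ H] [CompleteSpace H]
    [NormedAddCommGroup K] [InnerProductSpace ℂ K] [CompleteSpace K]
    (A : H →L[ℂ] H) (B : K →L[ℂ] K) (T : K →L[ℂ] H) (Tm Te : H →L[ℂ] K)
    (hTm : T ∘L Tm ∘L T = T) (hTe : T ∘L Te ∘L T = T) :
    ((A = T ∘L B ∘L Te ∧ B = Tm ∘L A ∘L T) ↔
      (A ∘L T = T ∘L B ∧ A = A ∘L T ∘L Te ∧ B = Tm ∘L T ∘L B)) ∧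
    ((A ∘L T = T ∘L B ∧ A = A ∘L T ∘L Te ∧ B = Tm ∘L T ∘L B) ↔
      (B ∘L Te = Tm ∘L A ∧ T ∘L Tm ∘L A = A ∧ B ∘L Te ∘L T = B)) := by
  have hTm' : ∀ x, T (Tm (T x)) = T x := fun x => DFunLike.congr_fun hTm x
  have hTe' : ∀ x, T (Te (T x)) = T x := fun x => DFunLike.congr_fun hTe x
  constructor
  · constructor
    · rintro ⟨h1, h2⟩
      have h1' : ∀ x, A x = T (B (Te x)) := fun x => DFunLike.congr_fun h1 x
      have h2' : ∀ x, B x = Tm (A (T x)) := fun x => DFunLike.congr_fun h2 x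
      refine ⟨?_, ?_, ?_⟩ <;> ext x <;> simp only [comp_apply]
      · calc A (T x) = T (B (Te (T x))) := h1' _
          _ = T (Tm (A (T (Te (T x))))) := congrArg T (h2' _)
          _ = T (Tm (A (T x))) := congrArg (fun y => T (Tm (A y))) (hTe' x)
          _ = T (B x) := (congrArg T (h2' x)).symm
      · calc A x = T (B (Te x)) := h1' x
          _ = T (Tm (A (T (Te x)))) := congrArg T (h2' _)
          _ = T (Tm (A (T (Te (T (Te x)))))) :=
              (congrArg (fun y => T (Tm (A y))) (hTe' (Te x))).symm
          _ = T (B (Te (T (Te x)))) := (congrArg T (h2' _)).symm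
          _ = A (T (Te x)) := (h1' _).symm
      · calc B x = Tm (A (T x)) := h2' x
          _ = Tm (T (B (Te (T x)))) := congrArg Tm (h1' _)
          _ = Tm (T (Tm (T (B (Te (T x)))))) :=
              (congrArg Tm (hTm' (B (Te (T x))))).symm
          _ = Tm (T (Tm (A (T x)))) := (congrArg (fun y => Tm (T (Tm y))) (h1' _)).symm
          _ = Tm (T (B x)) := (congrArg (fun y => Tm (T y)) (h2' x)).symm
    · rintro ⟨h1, h2, h3⟩
      have h1' : ∀ x, A (T x) = T (B x) := fun x => DFunLike.congr_fun h1 x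
      have h2' : ∀ x, A x = A (T (Te x)) := fun x => DFunLike.congr_fun h2 x
      have h3' : ∀ x, B x = Tm (T (B x)) := fun x => DFunLike.congr_fun h3 x
      constructor <;> ext x <;> simp only [comp_apply]
      · calc A x = A (T (Te x)) := h2' x
          _ = T (B (Te x)) := h1' _
      · calc B x = Tm (T (B x)) := h3' x
          _ = Tm (A (T x)) := (congrArg Tm (h1' x)).symm
  · constructor
    · rintro ⟨h1, h2, h3⟩
      have h1' : ∀ x, A (T x) = T (B x) := fun x => DFunLike.congr_fun h1 x
      have h2' : ∀ x, A x = A (T (Te x)) := fun x => DFunLike.congr_fun h2 x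
      have h3' : ∀ x, B x = Tm (T (B x)) := fun x => DFunLike.congr_fun h3 x
      refine ⟨?_, ?_, ?_⟩ <;> ext x <;> simp only [comp_apply]
      · calc B (Te x) = Tm (T (B (Te x))) := h3' _
          _ = Tm (A (T (Te x))) := (congrArg Tm (h1' _)).symm
          _ = Tm (A x) := (congrArg Tm (h2' x)).symm
      · calc T (Tm (A x)) = T (Tm (A (T (Te x)))) := congrArg (fun y => T (Tm y)) (h2' x)
          _ = T (Tm (T (B (Te x)))) := congrArg (fun y => T (Tm y)) (h1' _)
          _ = T (B (Te x)) := hTm' _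
          _ = A (T (Te x)) := (h1' _).symm
          _ = A x := (h2' x).symm
      · calc B (Te (T x)) = Tm (T (B (Te (T x)))) := h3' _
          _ = Tm (A (T (Te (T x)))) := (congrArg Tm (h1' _)).symm
          _ = Tm (A (T x)) := congrArg (fun y => Tm (A y)) (hTe' x)
          _ = Tm (T (B x)) := congrArg Tm (h1' x)
          _ = B x := (h3' x).symm
    · rintro ⟨g1, g2, g3⟩
      have g1' : ∀ x, B (Te x) = Tm (A x) := fun x => DFunLike.congr_fun g1 x
      have g2' : ∀ x, T (Tm (A x)) = A x := fun x => DFunLike.congr_fun g2 x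
      have g3' : ∀ x, B (Te (T x)) = B x := fun x => DFunLike.congr_fun g3 x
      refine ⟨?_, ?_, ?_⟩ <;> ext x <;> simp only [comp_apply]
      · calc A (T x) = T (Tm (A (T x))) := (g2' _).symm
          _ = T (B (Te (T x))) := (congrArg T (g1' _)).symm
          _ = T (B x) := congrArg T (g3' x)
      · calc A x = T (Tm (A x)) := (g2' x).symm
          _ = T (B (Te x)) := (congrArg T (g1' x)).symm
          _ = T (B (Te (T (Te x)))) := (congrArg T (g3' (Te x))).symm
          _ = T (Tm (A (T (Te x)))) := congrArg T (g1' _)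
          _ = A (T (Te x)) := g2' _
      · calc B x = B (Te (T x)) := (g3' x).symm
          _ = Tm (A (T x)) := g1' _
          _ = Tm (T (Tm (A (T x)))) := (congrArg Tm (g2' _)).symm
          _ = Tm (T (B (Te (T x)))) := (congrArg (fun y => Tm (T y)) (g1' _)).symm
          _ = Tm (T (B x)) := congrArg (fun y => Tm (T y)) (g3' x)
end

section
/- Let A, B be group invertible and suppose X satisfies AX - XB = C. Then the operator P = [[AA♯, -X B B♯],[0, B B♯]] is regular, P⁻ = [[AA♯, AA♯ X B B♯],[0, B B♯]] and P⁼ = [[AA♯, AA♯ X],[0, B B♯]] are inner inverses of P, and P [[A,0],[0,B]] P⁼ = [[A,C],[0,B]] and P⁻ [[A,C],[0,B]] P = [[A,0],[0,B]]; hence the block matrix M = [[A,C],[0,B]] is pseudo-similar to D = [[A,0],[0,B]]. -/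
open ContinuousLinearMap

/-- The 2×2 block operator `[[A₁₁, A₁₂],[A₂₁, A₂₂]]` on `H ⊕ K`. -/
noncomputable def blk {H K : Type*} [NormedAddCommGroup H] [InnerProductSpace ℂ H]
    [NormedAddCommGroup K] [InnerProductSpace ℂ K]
    (A₁₁ : H →L[ℂ] H) (A₁₂ : K →L[ℂ] H) (A₂₁ : H →L[ℂ] K) (A₂₂ : K →L[ℂ] K) :
    (H × K) →L[ℂ] (H × K) :=
  (A₁₁ ∘L fst ℂ H K + A₁₂ ∘L snd ℂ H K).prod (A₂₁ ∘L fst ℂ H K + A₂₂ ∘L snd ℂ H K)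

/-- Let `A`, `B` be group invertible (group inverses `As`, `Bs`) and suppose
`A X - X B = C`.  Then `P = [[A A♯, -X B B♯],[0, B B♯]]` is regular,
`P⁻ = [[A A♯, A A♯ X B B♯],[0, B B♯]]` and `P⁼ = [[A A♯, A A♯ X],[0, B B♯]]` are inner
inverses of `P`, and `P D P⁼ = M`, `P⁻ M P = D` where `M = [[A, C],[0, B]]`,
`D = [[A, 0],[0, B]]`; hence `M` is pseudo-similar to `D` via `P`. -/
theorem stmt_7 {H K : Type*} [NormedAddCommGroup H] [InnerProductSpace ℂ H] [CompleteSpace H]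
    [NormedAddCommGroup K] [InnerProductSpace ℂ K] [CompleteSpace K]
    (A As : H →L[ℂ] H) (B Bs : K →L[ℂ] K) (C X : K →L[ℂ] H)
    (hA1 : A * As * A = A) (hA2 : As * A * As = As) (hA3 : A * As = As * A)
    (hB1 : B * Bs * B = B) (hB2 : Bs * B * Bs = Bs) (hB3 : B * Bs = Bs * B)
    (hX : A ∘L X - X ∘L B = C) :
    letI P := blk (A * As) (-(X ∘L (B * Bs))) 0 (B * Bs)
    letI Pm := blk (A * As) ((A * As) ∘L X ∘L (B * Bs)) 0 (B * Bs)
    letI Pe := blk (A * As) ((A * As) ∘L X) 0 (B * Bs)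
    letI M := blk A C 0 B
    letI D := blk A 0 0 B
    P * Pm * P = P ∧ P * Pe * P = P ∧ P * D * Pe = M ∧ Pm * M * P = D := by
  have pA1 : ∀ v, A (As (A v)) = A v := fun v => by
    simpa using DFunLike.congr_fun hA1 v
  have pA3 : ∀ v, A (A (As v)) = A v := fun v => by
    have h : A * (A * As) = A := by rw [hA3, ← mul_assoc, hA1]
    simpa using DFunLike.congr_fun h v
  have pB1 : ∀ v, B (Bs (B v)) = B v := fun v => by
    simpa using DFunLike.congr_fun hB1 v
  have pB3 : ∀ v, B (B (Bs v)) = B v := fun v => by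
    have h : B * (B * Bs) = B := by rw [hB3, ← mul_assoc, hB1]
    simpa using DFunLike.congr_fun h v
  have pC : ∀ v, C v = A (X v) - X (B v) := fun v => by
    rw [← hX]; simp
  refine ⟨?_, ?_, ?_, ?_⟩ <;>
    (ext v <;> (simp [blk, mul_apply, map_sub, map_add, pA1, pA3, pB1, pB3, pC]; try abel))
end

section
/- Let A, B be group invertible operators with spectral idempotents Aᵖ = I - A A♯ and Bᵖ = I - B B♯. If Aᵖ C Bᵖ = 0, then X₀ = A♯ C and Y₀ = (A A♯ - I) C B♯ satisfy A X₀ - Y₀ B = C. -/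
open ContinuousLinearMap

/-- Let `A`, `B` be group invertible with group inverses `A♯ = As`, `B♯ = Bs`
and spectral idempotents `Aᵖ = 1 - A A♯`, `Bᵖ = 1 - B B♯`. If `Aᵖ C Bᵖ = 0`, then
`X₀ = A♯ C` and `Y₀ = (A A♯ - I) C B♯` satisfy `A X₀ - Y₀ B = C`. -/
theorem stmt_8 {H K : Type*} [NormedAddCommGroup H] [InnerProductSpace ℂ H] [CompleteSpace H]
    [NormedAddCommGroup K] [InnerProductSpace ℂ K] [CompleteSpace K]
    (A As : H →L[ℂ] H) (B Bs : K →L[ℂ] K) (C : K →L[ℂ] H)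
    (hA1 : A * As * A = A) (hA2 : As * A * As = As) (hA3 : A * As = As * A)
    (hB1 : B * Bs * B = B) (hB2 : Bs * B * Bs = Bs) (hB3 : B * Bs = Bs * B)
    (hC : (1 - A * As) ∘L C ∘L (1 - B * Bs) = 0) :
    A ∘L (As ∘L C) - ((A * As - 1) ∘L C ∘L Bs) ∘L B = C := by
  have hB3' : Bs.comp B = B.comp Bs := by rw [← mul_def, ← mul_def, hB3]
  simp only [sub_comp, comp_sub, one_def, id_comp, comp_id, mul_def, comp_assoc, hB3'] at hC ⊢
  rw [sub_sub, sub_eq_zero] at hC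
  conv_rhs => rw [hC]
  abel
end

section
/- Let A, B be group invertible operators with Aᵖ C Bᵖ = 0, and define P = [[A A♯, Aᵖ C B♯],[0, B B♯]] and Q = [[A A♯, A♯ C],[0, B B♯]] on H ⊕ K. Then P⁻ = [[A A♯, 0],[0, B B♯]] is an inner inverse of P, Q⁻ = [[A A♯, -A♯ C B B♯],[0, B B♯]] is an inner inverse of Q, and P D Q = M and P⁻ M Q⁻ = D, where M = [[A, C],[0, B]] and D = [[A, 0],[0, B]]. Hence M and D are pseudo-equivalent via P and Q. -/
open ContinuousLinearMap

lemma blk_mul {H K : Type*} [NormedAddCommGroup H] [InnerProductSpace ℂ H]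
    [NormedAddCommGroup K] [InnerProductSpace ℂ K]
    (a : H →L[ℂ] H) (b : K →L[ℂ] H) (c : H →L[ℂ] K) (d : K →L[ℂ] K)
    (e : H →L[ℂ] H) (f : K →L[ℂ] H) (g : H →L[ℂ] K) (h : K →L[ℂ] K) :
    blk a b c d * blk e f g h
      = blk (a ∘L e + b ∘L g) (a ∘L f + b ∘L h) (c ∘L e + d ∘L g) (c ∘L f + d ∘L h) := by
  ext x <;> simp [blk, mul_apply]

lemma blk_congr {H K : Type*} [NormedAddCommGroup H] [InnerProductSpace ℂ H]
    [NormedAddCommGroup K] [InnerProductSpace ℂ K]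
    {a a' : H →L[ℂ] H} {b b' : K →L[ℂ] H} {c c' : H →L[ℂ] K} {d d' : K →L[ℂ] K}
    (h1 : a = a') (h2 : b = b') (h3 : c = c') (h4 : d = d') :
    blk a b c d = blk a' b' c' d' := by rw [h1, h2, h3, h4]

/-- Let `A`, `B` be group invertible (group inverses `As`, `Bs`, spectral
idempotents `Aᵖ = 1 - A As`, `Bᵖ = 1 - B Bs`) with `Aᵖ C Bᵖ = 0`.  With
`P = [[A A♯, Aᵖ C B♯],[0, B B♯]]`, `Q = [[A A♯, A♯ C],[0, B B♯]]`,
`P⁻ = [[A A♯, 0],[0, B B♯]]`, `Q⁻ = [[A A♯, -A♯ C B B♯],[0, B B♯]]`,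
`M = [[A, C],[0, B]]` and `D = [[A, 0],[0, B]]`, we have that `P⁻` is an inner inverse of
`P`, `Q⁻` is an inner inverse of `Q`, `P D Q = M` and `P⁻ M Q⁻ = D`; hence `M` and `D`
are pseudo-equivalent via `P` and `Q`. -/
theorem stmt_11 {H K : Type*} [NormedAddCommGroup H] [InnerProductSpace ℂ H] [CompleteSpace H]
    [NormedAddCommGroup K] [InnerProductSpace ℂ K] [CompleteSpace K]
    (A As : H →L[ℂ] H) (B Bs : K →L[ℂ] K) (C : K →L[ℂ] H)
    (hA1 : A * As * A = A) (hA2 : As * A * As = As) (hA3 : A * As = As * A)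
    (hB1 : B * Bs * B = B) (hB2 : Bs * B * Bs = Bs) (hB3 : B * Bs = Bs * B)
    (hC : (1 - A * As) ∘L C ∘L (1 - B * Bs) = 0) :
    letI P := blk (A * As) ((1 - A * As) ∘L C ∘L Bs) 0 (B * Bs)
    letI Q := blk (A * As) (As ∘L C) 0 (B * Bs)
    letI Pm := blk (A * As) 0 0 (B * Bs)
    letI Qm := blk (A * As) (-(As ∘L C ∘L (B * Bs))) 0 (B * Bs)
    letI M := blk A C 0 B
    letI D := blk A 0 0 B
    P * Pm * P = P ∧ Q * Qm * Q = Q ∧ P * D * Q = M ∧ Pm * M * Qm = D := by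
  have eMul : (A * As) * (A * As) = A * As := by
    rw [mul_assoc, ← mul_assoc As, hA2]
  have fMul : (B * Bs) * (B * Bs) = B * Bs := by
    rw [mul_assoc, ← mul_assoc Bs, hB2]
  have F1 : (A * As) ∘L (A * As) = A * As := eMul
  have F2 : (B * Bs) ∘L (B * Bs) = B * Bs := fMul
  have F4 : Bs ∘L (B * Bs) = Bs := by rw [← mul_def, ← mul_assoc, hB2]
  have F5 : (A * As) ∘L As = As := by rw [← mul_def, hA3, hA2]
  have F6 : (A * As) ∘L A = A := hA1
  have F7 : (B * Bs) ∘L B = B := hB1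
  have F9 : A ∘L (A * As) = A := by rw [← mul_def, hA3, ← mul_assoc, hA1]
  have F10 : B ∘L (B * Bs) = B := by rw [← mul_def, hB3, ← mul_assoc, hB1]
  have F11 : Bs ∘L B = B * Bs := hB3.symm
  have z : (A * As) ∘L (1 - A * As) = 0 := by
    rw [← mul_def, mul_sub, mul_one, eMul, sub_self]
  have r1 : ∀ X : K →L[ℂ] H, (A * As) ∘L ((A * As) ∘L X) = (A * As) ∘L X := fun X => by
    rw [← comp_assoc, F1]
  have r3 : ∀ X : K →L[ℂ] H, (A * As) ∘L ((1 - A * As) ∘L X) = 0 := fun X => by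
    rw [← comp_assoc, z, zero_comp]
  have r5 : ∀ X : K →L[ℂ] H, (A * As) ∘L (As ∘L X) = As ∘L X := fun X => by
    rw [← comp_assoc, F5]
  have rAAs : ∀ X : K →L[ℂ] H, A ∘L (As ∘L X) = (A * As) ∘L X := fun X => by
    rw [← comp_assoc]; rfl
  refine ⟨?_, ?_, ?_, ?_⟩ <;> rw [blk_mul, blk_mul] <;> apply blk_congr <;>
    simp only [comp_zero, zero_comp, add_zero, zero_add, neg_zero, comp_add, add_comp,
      neg_comp, comp_neg, comp_assoc, F1, F2, F4, F6, F7, F9, F10, F11, r1, r3, r5, rAAs,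
      neg_add_cancel, add_neg_cancel]
  have h := hC
  simp only [comp_sub, sub_comp, one_def, comp_id, id_comp] at h ⊢
  rw [← sub_eq_zero, ← neg_eq_zero, ← h]; abel
end

section
/- Let A, B be group invertible operators with Aᵖ C Bᵖ = 0. Then every pair (X, Y) of the form X = A♯ C + A♯ Z B + Aᵖ Z₁, Y = -Aᵖ C B♯ + Z + A A♯ Z B B♯ - Z B B♯ (for arbitrary Z, Z₁) solves A X - Y B = C, and the particular choice Z₁ = A♯ C, Z = (A A♯ - I) C B♯ recovers X = A♯ C and Y = (A A♯ - I) C B♯. -/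
open ContinuousLinearMap

/-- Let `A`, `B` be group invertible (group inverses `As`, `Bs`, spectral
idempotents `Aᵖ = 1 - A As`, `Bᵖ = 1 - B Bs`) with `Aᵖ C Bᵖ = 0`. Then every pair
`X = A♯ C + A♯ Z B + Aᵖ Z₁`, `Y = -Aᵖ C B♯ + Z + A A♯ Z B B♯ - Z B B♯` solves
`A X - Y B = C`, and the choice `Z₁ = A♯ C`, `Z = (A A♯ - I) C B♯` recovers
`X = A♯ C`, `Y = (A A♯ - I) C B♯`. -/
theorem stmt_14 {H K : Type*} [NormedAddCommGroup H] [InnerProductSpace ℂ H] [CompleteSpace H]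
    [NormedAddCommGroup K] [InnerProductSpace ℂ K] [CompleteSpace K]
    (A As : H →L[ℂ] H) (B Bs : K →L[ℂ] K) (C : K →L[ℂ] H)
    (hA1 : A * As * A = A) (hA2 : As * A * As = As) (hA3 : A * As = As * A)
    (hB1 : B * Bs * B = B) (hB2 : Bs * B * Bs = Bs) (hB3 : B * Bs = Bs * B)
    (hC : (1 - A * As) ∘L C ∘L (1 - B * Bs) = 0) :
    (∀ Z Z₁ : K →L[ℂ] H,
      A ∘L (As ∘L C + As ∘L Z ∘L B + (1 - A * As) ∘L Z₁) -
        (-((1 - A * As) ∘L C ∘L Bs) + Z + (A * As) ∘L Z ∘L (B * Bs) - Z ∘L (B * Bs)) ∘L B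
        = C) ∧
    (As ∘L C + As ∘L ((A * As - 1) ∘L C ∘L Bs) ∘L B + (1 - A * As) ∘L (As ∘L C)
        = As ∘L C ∧
      -((1 - A * As) ∘L C ∘L Bs) + ((A * As - 1) ∘L C ∘L Bs)
          + (A * As) ∘L ((A * As - 1) ∘L C ∘L Bs) ∘L (B * Bs)
          - ((A * As - 1) ∘L C ∘L Bs) ∘L (B * Bs)
        = (A * As - 1) ∘L C ∘L Bs) := by
  have hC' : ∀ x, C x - A (As (C x)) - (C (B (Bs x)) - A (As (C (B (Bs x))))) = 0 := by
    intro x; have := congrFun (congrArg DFunLike.coe hC) x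
    simpa [sub_apply, one_apply, mul_apply] using this
  have e1 : ∀ v, A (A (As v)) = A v := fun v => by
    have : A * A * As = A := by rw [mul_assoc, hA3, ← mul_assoc, hA1]
    simpa [mul_apply] using congrFun (congrArg DFunLike.coe this) v
  have e2 : ∀ v, A (As (A v)) = A v := fun v => by
    simpa [mul_apply] using congrFun (congrArg DFunLike.coe hA1) v
  have e3 : ∀ v, As (A (As v)) = As v := fun v => by
    simpa [mul_apply] using congrFun (congrArg DFunLike.coe hA2) v
  have e4 : ∀ v, B (Bs (B v)) = B v := fun v => by
    simpa [mul_apply] using congrFun (congrArg DFunLike.coe hB1) v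
  have e5 : ∀ v, Bs (B (Bs v)) = Bs v := fun v => by
    simpa [mul_apply] using congrFun (congrArg DFunLike.coe hB2) v
  have e6 : ∀ v, B (Bs v) = Bs (B v) := fun v => by
    simpa [mul_apply] using congrFun (congrArg DFunLike.coe hB3) v
  have e7 : ∀ v, A (As v) = As (A v) := fun v => by
    simpa [mul_apply] using congrFun (congrArg DFunLike.coe hA3) v
  have e3' : ∀ v, A (As (As v)) = As v := fun v => by rw [e7, e3]
  have e5' : ∀ v, Bs (Bs (B v)) = Bs v := fun v => by rw [← e6, e5]
  refine ⟨fun Z Z₁ => ?_, ?_, ?_⟩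
  · ext x
    simp only [sub_apply, add_apply, neg_apply, comp_apply, one_apply_eq_self, mul_apply_eq_comp,
      map_add, map_sub, map_neg, e1, e2, e3, e4, e5, e6, e3', e5']
    have h := hC' x
    simp only [e6] at h
    linear_combination (norm := module) (-1:ℂ) • h
  · ext x
    simp only [sub_apply, add_apply, neg_apply, comp_apply, one_apply_eq_self, mul_apply_eq_comp,
      map_add, map_sub, map_neg, e1, e2, e3, e4, e5, e6, e3', e5']
    abel
  · ext x
    simp only [sub_apply, add_apply, neg_apply, comp_apply, one_apply_eq_self, mul_apply_eq_comp,
      map_add, map_sub, map_neg, e1, e2, e3, e4, e5, e6, e3', e5']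
    abel
end
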